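/- Let P be a finite poset with k points of which exactly m are minimal (1 ≤ m ≤ k). Then d(P) ≤ 2^{m−1} + 2^{k−1}, and equality holds if and only if P is isomorphic to A_{m−1} + (A_1 ⊕ A_{k−m}), the disjoint sum of an (m−1)-element antichain with the poset obtained by placing one element below a (k−m)-element antichain. -/

import Mathlib

open scoped Classical

variable {α : Type*} [DecidableEq α]

/-- `q` is a partial order relation with ground set `S`: it is a set of pairs
contained in `S × S`, reflexive on `S`, transitive and antisymmetric. -/
def IsPOon (S : Finset α) (q : Finset (α × α)) : Prop :=
  q ⊆ S ×ˢ S ∧ (∀ x ∈ S, (x, x) ∈ q) ∧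
  (∀ x y z : α, (x, y) ∈ q → (y, z) ∈ q → (x, z) ∈ q) ∧
  (∀ x y : α, (x, y) ∈ q → (y, x) ∈ q → x = y)

/-- The relation induced on a subset `A` of the ground set. -/
def restrictRel (q : Finset (α × α)) (A : Finset α) : Finset (α × α) :=
  q.filter fun r => r.1 ∈ A ∧ r.2 ∈ A

/-- The downsets of the poset `(S, q)`. -/
noncomputable def downsets (S : Finset α) (q : Finset (α × α)) : Finset (Finset α) :=
  S.powerset.filter fun D => ∀ y ∈ D, ∀ x : α, (x, y) ∈ q → x ∈ D

/-- `d(P)`, the number of downsets of the poset `(S, q)`. -/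
noncomputable def dnum (S : Finset α) (q : Finset (α × α)) : ℕ :=
  (downsets S q).card

/-- The upsets of the poset `(S, q)`. -/
noncomputable def upsets (S : Finset α) (q : Finset (α × α)) : Finset (Finset α) :=
  S.powerset.filter fun U => ∀ x ∈ U, ∀ y : α, (x, y) ∈ q → y ∈ U

/-- Down-closure `QA = {x : x ≤_Q a for some a ∈ A}`. -/
def dcl (q : Finset (α × α)) (A : Finset α) : Finset α :=
  (q.filter fun r => r.2 ∈ A).image Prod.fst

/-- Up-closure `AQ = {y : a ≤_Q y for some a ∈ A}`. -/
def ucl (q : Finset (α × α)) (A : Finset α) : Finset α :=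
  (q.filter fun r => r.1 ∈ A).image Prod.snd

/-- The set of minimal elements of the poset `(S, q)`. -/
noncomputable def minset (S : Finset α) (q : Finset (α × α)) : Finset α :=
  S.filter fun x => ∀ y : α, (y, x) ∈ q → y = x

/-- `E(M, P)`: the partial orders on `M ∪ K` inducing `p` on `K` whose set of
minimal elements is exactly `M`. -/
noncomputable def extPOs (M K : Finset α) (p : Finset (α × α)) :
    Finset (Finset (α × α)) :=
  ((M ∪ K) ×ˢ (M ∪ K)).powerset.filter fun q =>
    IsPOon (M ∪ K) q ∧ restrictRel q K = p ∧ minset (M ∪ K) q = M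

/-- `A` is an antichain of the poset `(S, q)`. -/
def isAntichain (S : Finset α) (q : Finset (α × α)) (A : Finset α) : Prop :=
  A ⊆ S ∧ ∀ x ∈ A, ∀ y ∈ A, (x, y) ∈ q → x = y

/-- The posets `(S, q)` and `(T, r)` are order-isomorphic. -/
def POIso {β : Type*} (S : Finset α) (q : Finset (α × α))
    (T : Finset β) (r : Finset (β × β)) : Prop :=
  ∃ f : α → β, Set.BijOn f ↑S ↑T ∧ ∀ x ∈ S, ∀ y ∈ S, ((x, y) ∈ q ↔ (f x, f y) ∈ r)

/-- `C` is a chain of the poset `(S, q)`. -/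
def isChainOn (S : Finset α) (q : Finset (α × α)) (C : Finset α) : Prop :=
  C ⊆ S ∧ ∀ x ∈ C, ∀ y ∈ C, (x, y) ∈ q ∨ (y, x) ∈ q

/-- The height of the poset `(S, q)`: the maximal size of a chain. -/
noncomputable def heightP (S : Finset α) (q : Finset (α × α)) : ℕ :=
  (S.powerset.filter (isChainOn S q)).sup Finset.card

set_option linter.unusedSectionVars false
set_option linter.unusedVariables false
set_option maxHeartbeats 1600000

lemma mem_ucl {q : Finset (α × α)} {A : Finset α} {y : α} :
    y ∈ ucl q A ↔ ∃ a ∈ A, (a, y) ∈ q := by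
  constructor
  · intro h
    simp only [ucl, Finset.mem_image, Finset.mem_filter] at h
    obtain ⟨⟨a, b⟩, ⟨hab, ha⟩, rfl⟩ := h
    exact ⟨a, ha, hab⟩
  · rintro ⟨a, ha, hq⟩
    simp only [ucl, Finset.mem_image, Finset.mem_filter]
    exact ⟨(a, y), ⟨hq, ha⟩, rfl⟩

lemma mem_downsets {S : Finset α} {q : Finset (α × α)} {D : Finset α} :
    D ∈ downsets S q ↔ D ⊆ S ∧ ∀ y ∈ D, ∀ x : α, (x, y) ∈ q → x ∈ D := by
  simp [downsets, Finset.mem_filter, Finset.mem_powerset]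

lemma mem_minset {S : Finset α} {q : Finset (α × α)} {x : α} :
    x ∈ minset S q ↔ x ∈ S ∧ ∀ y : α, (y, x) ∈ q → y = x := by
  simp [minset, Finset.mem_filter]

lemma exists_min_le {S : Finset α} {q : Finset (α × α)} (hq : IsPOon S q) :
    ∀ x ∈ S, ∃ a ∈ minset S q, (a, x) ∈ q := by
  obtain ⟨hsub, hrefl, htrans, hanti⟩ := hq
  intro x hx
  generalize hn : (S.filter fun y => (y, x) ∈ q).card = n
  induction n using Nat.strong_induction_on generalizing x with
  | _ n ih =>
    by_cases hmin : ∀ y : α, (y, x) ∈ q → y = x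
    · exact ⟨x, mem_minset.mpr ⟨hx, hmin⟩, hrefl x hx⟩
    · push_neg at hmin
      obtain ⟨y, hyx, hne⟩ := hmin
      have hyS : y ∈ S := (Finset.mem_product.mp (hsub hyx)).1
      have hlt : (S.filter fun z => (z, y) ∈ q).card < n := by
        subst hn
        apply Finset.card_lt_card
        rw [Finset.ssubset_iff_of_subset]
        · refine ⟨x, ?_, ?_⟩
          · simp only [Finset.mem_filter]; exact ⟨hx, hrefl x hx⟩
          · simp only [Finset.mem_filter, not_and]
            intro _ hxy
            exact hne (hanti _ _ hyx hxy)
        · intro z hz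
          simp only [Finset.mem_filter] at hz ⊢
          exact ⟨hz.1, htrans _ _ _ hz.2 hyx⟩
      obtain ⟨a, ha, haq⟩ := ih _ hlt y hyS rfl
      exact ⟨a, ha, htrans _ _ _ haq hyx⟩

lemma two_pow_add_two_pow_le (a b : ℕ) : 2 ^ a + 2 ^ b ≤ 1 + 2 ^ (a + b) := by
  have ha : 1 ≤ 2 ^ a := Nat.one_le_two_pow
  have hb : 1 ≤ 2 ^ b := Nat.one_le_two_pow
  have : 2 ^ (a + b) = 2 ^ a * 2 ^ b := pow_add 2 a b
  nlinarith

lemma two_pow_eq_cases {a b : ℕ} (h : 2 ^ a + 2 ^ b = 1 + 2 ^ (a + b)) :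
    a = 0 ∨ b = 0 := by
  by_contra hc
  push_neg at hc
  have ha : 2 ≤ 2 ^ a := by
    calc 2 = 2 ^ 1 := rfl
    _ ≤ 2 ^ a := Nat.pow_le_pow_right (by norm_num) (Nat.one_le_iff_ne_zero.mpr hc.1)
  have hb : 2 ≤ 2 ^ b := by
    calc 2 = 2 ^ 1 := rfl
    _ ≤ 2 ^ b := Nat.pow_le_pow_right (by norm_num) (Nat.one_le_iff_ne_zero.mpr hc.2)
  have : 2 ^ (a + b) = 2 ^ a * 2 ^ b := pow_add 2 a b
  nlinarith

lemma exists_bijOn_of_card_eq (s : Finset α) (t : Finset ℕ) (h : s.card = t.card) :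
    ∃ f : α → ℕ, Set.BijOn f ↑s ↑t := by
  have e := Finset.equivOfCardEq h
  refine ⟨fun a => if ha : a ∈ s then (e ⟨a, ha⟩ : ℕ) else 0, ?_, ?_, ?_⟩
  · intro a ha
    simp only [Finset.mem_coe] at ha
    simp only [dif_pos ha]
    exact Finset.mem_coe.mpr (e ⟨a, ha⟩).2
  · intro a ha b hb hab
    simp only [Finset.mem_coe] at ha hb
    simp only [dif_pos ha, dif_pos hb] at hab
    have : e ⟨a, ha⟩ = e ⟨b, hb⟩ := Subtype.ext hab
    exact congrArg Subtype.val (e.injective this)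
  · intro y hy
    simp only [Finset.mem_coe] at hy
    refine ⟨(e.symm ⟨y, hy⟩ : α), Finset.mem_coe.mpr (e.symm ⟨y, hy⟩).2, ?_⟩
    simp only [dif_pos (e.symm ⟨y, hy⟩).2]
    rw [Subtype.coe_eta, e.apply_symm_apply]

/-- number of downsets whose set of minimal... intersection with minset is A -/
noncomputable def gfib (S : Finset α) (q : Finset (α × α)) (A : Finset α) : ℕ :=
  ((downsets S q).filter fun D => D ∩ minset S q = A).card

lemma inter_union_sdiff_self (D M : Finset α) : D ∩ M ∪ D \ M = D := by
  ext x; simp only [Finset.mem_union, Finset.mem_inter, Finset.mem_sdiff]; tauto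

lemma fiber_subset {S : Finset α} {q : Finset (α × α)} {A D : Finset α}
    (hD : D ∈ downsets S q) (hDA : D ∩ minset S q = A) :
    D \ minset S q ⊆ (S \ minset S q) \ ucl q (minset S q \ A) := by
  obtain ⟨hDS, hdown⟩ := mem_downsets.mp hD
  intro y hy
  obtain ⟨hyD, hyM⟩ := Finset.mem_sdiff.mp hy
  refine Finset.mem_sdiff.mpr ⟨Finset.mem_sdiff.mpr ⟨hDS hyD, hyM⟩, ?_⟩
  intro hyu
  obtain ⟨a, ha, haq⟩ := mem_ucl.mp hyu
  obtain ⟨haM, haA⟩ := Finset.mem_sdiff.mp ha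
  exact haA (hDA ▸ Finset.mem_inter.mpr ⟨hdown y hyD a haq, haM⟩)

lemma fiber_injOn {S : Finset α} {q : Finset (α × α)} {A : Finset α} :
    Set.InjOn (fun D => D \ minset S q)
      ((downsets S q).filter fun D => D ∩ minset S q = A) := by
  intro D₁ h₁ D₂ h₂ h
  simp only [Finset.coe_filter, Set.mem_setOf_eq] at h₁ h₂
  dsimp only at h
  calc D₁ = D₁ ∩ minset S q ∪ D₁ \ minset S q := (inter_union_sdiff_self _ _).symm
    _ = D₂ ∩ minset S q ∪ D₂ \ minset S q := by rw [h₁.2, h₂.2, h]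
    _ = D₂ := inter_union_sdiff_self _ _

lemma gfib_le {S : Finset α} {q : Finset (α × α)} {A : Finset α} :
    gfib S q A ≤ 2 ^ ((S \ minset S q) \ ucl q (minset S q \ A)).card := by
  rw [gfib, ← Finset.card_powerset]
  apply Finset.card_le_card_of_injOn (fun D => D \ minset S q)
  · intro D hD
    rw [Finset.mem_coe, Finset.mem_filter] at hD
    exact Finset.mem_powerset.mpr (fiber_subset hD.1 hD.2)
  · exact fiber_injOn

lemma card_add_card_le {S : Finset α} {q : Finset (α × α)} (hq : IsPOon S q)
    {A : Finset α} (hA : A ⊆ minset S q) :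
    ((S \ minset S q) \ ucl q (minset S q \ A)).card +
      ((S \ minset S q) \ ucl q A).card ≤ (S \ minset S q).card := by
  have hdisj : Disjoint ((S \ minset S q) \ ucl q (minset S q \ A))
      ((S \ minset S q) \ ucl q A) := by
    rw [Finset.disjoint_left]
    intro x hx hx'
    obtain ⟨hxT, hxu1⟩ := Finset.mem_sdiff.mp hx
    obtain ⟨-, hxu2⟩ := Finset.mem_sdiff.mp hx'
    obtain ⟨a, ha, haq⟩ := exists_min_le hq x (Finset.mem_sdiff.mp hxT).1
    by_cases haA : a ∈ A
    · exact hxu2 (mem_ucl.mpr ⟨a, haA, haq⟩)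
    · exact hxu1 (mem_ucl.mpr ⟨a, Finset.mem_sdiff.mpr ⟨ha, haA⟩, haq⟩)
  rw [← Finset.card_union_of_disjoint hdisj]
  apply Finset.card_le_card
  intro x hx
  rcases Finset.mem_union.mp hx with h | h <;> exact (Finset.mem_sdiff.mp h).1

lemma pair_le {S : Finset α} {q : Finset (α × α)} (hq : IsPOon S q)
    {A : Finset α} (hA : A ⊆ minset S q) :
    gfib S q A + gfib S q (minset S q \ A) ≤ 1 + 2 ^ (S \ minset S q).card := by
  have h1 := gfib_le (S := S) (q := q) (A := A)
  have h2 := gfib_le (S := S) (q := q) (A := minset S q \ A)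
  rw [Finset.sdiff_sdiff_eq_self hA] at h2
  calc gfib S q A + gfib S q (minset S q \ A)
      ≤ 2 ^ ((S \ minset S q) \ ucl q (minset S q \ A)).card +
        2 ^ ((S \ minset S q) \ ucl q A).card := Nat.add_le_add h1 h2
    _ ≤ 1 + 2 ^ (((S \ minset S q) \ ucl q (minset S q \ A)).card +
        ((S \ minset S q) \ ucl q A).card) := two_pow_add_two_pow_le _ _
    _ ≤ 1 + 2 ^ (S \ minset S q).card :=
        Nat.add_le_add_left (Nat.pow_le_pow_right (by norm_num) (card_add_card_le hq hA)) _

lemma dnum_eq_sum_fibers {S : Finset α} {q : Finset (α × α)} :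
    dnum S q = ∑ A ∈ (minset S q).powerset, gfib S q A := by
  exact Finset.card_eq_sum_card_fiberwise
    (fun D _ => Finset.mem_powerset.mpr (Finset.inter_subset_right))

lemma dnum_eq_sum_pairs {S : Finset α} {q : Finset (α × α)} {a₀ : α}
    (ha₀ : a₀ ∈ minset S q) :
    dnum S q = ∑ B ∈ ((minset S q).erase a₀).powerset,
      (gfib S q B + gfib S q (minset S q \ B)) := by
  rw [dnum_eq_sum_fibers]
  have hins : minset S q = insert a₀ ((minset S q).erase a₀) :=
    (Finset.insert_erase ha₀).symm
  rw [Finset.sum_add_distrib]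
  nth_rewrite 1 [hins]
  rw [Finset.sum_powerset_insert (Finset.notMem_erase a₀ _)]
  congr 1
  apply Finset.sum_nbij' (i := fun B => (minset S q).erase a₀ \ B)
    (j := fun B => (minset S q).erase a₀ \ B)
  · intro B hB
    exact Finset.mem_powerset.mpr (Finset.sdiff_subset)
  · intro B hB
    exact Finset.mem_powerset.mpr (Finset.sdiff_subset)
  · intro B hB
    exact Finset.sdiff_sdiff_eq_self (Finset.mem_powerset.mp hB)
  · intro B hB
    exact Finset.sdiff_sdiff_eq_self (Finset.mem_powerset.mp hB)
  · intro B hB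
    have hBsub : B ⊆ (minset S q).erase a₀ := Finset.mem_powerset.mp hB
    congr 1
    ext x
    simp only [Finset.mem_insert, Finset.mem_sdiff, Finset.mem_erase, not_and, not_not]
    constructor
    · rintro (rfl | hxB)
      · exact ⟨ha₀, fun h => absurd rfl h.1⟩
      · exact ⟨(Finset.mem_erase.mp (hBsub hxB)).2, fun _ => hxB⟩
    · rintro ⟨hxM, hcond⟩
      by_cases hx : x = a₀
      · exact Or.inl hx
      · exact Or.inr (hcond ⟨hx, hxM⟩)

section assemble

lemma minset_subset {S : Finset α} {q : Finset (α × α)} : minset S q ⊆ S :=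
  Finset.filter_subset _ _

lemma sum_pairs_value {S : Finset α} {q : Finset (α × α)} {a₀ : α} {k m : ℕ}
    (hk : S.card = k) (hm : (minset S q).card = m) (hm1 : 1 ≤ m) (hmk : m ≤ k)
    (ha₀ : a₀ ∈ minset S q) :
    ∑ _B ∈ ((minset S q).erase a₀).powerset, (1 + 2 ^ (S \ minset S q).card)
      = 2 ^ (m - 1) + 2 ^ (k - 1) := by
  have hT : (S \ minset S q).card = k - m := by
    rw [Finset.card_sdiff_of_subset minset_subset, hk, hm]
  have hE : ((minset S q).erase a₀).card = m - 1 := by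
    rw [Finset.card_erase_of_mem ha₀, hm]
  rw [Finset.sum_const, Finset.card_powerset, hE, hT, smul_eq_mul, Nat.mul_add,
    Nat.mul_one, ← pow_add]
  congr 2
  omega

lemma dnum_le {S : Finset α} {q : Finset (α × α)} (hq : IsPOon S q) {k m : ℕ}
    (hk : S.card = k) (hm : (minset S q).card = m) (hm1 : 1 ≤ m) (hmk : m ≤ k) :
    dnum S q ≤ 2 ^ (m - 1) + 2 ^ (k - 1) := by
  obtain ⟨a₀, ha₀⟩ := Finset.card_pos.mp (by rw [hm]; omega : 0 < (minset S q).card)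
  rw [dnum_eq_sum_pairs ha₀, ← sum_pairs_value hk hm hm1 hmk ha₀]
  apply Finset.sum_le_sum
  intro B hB
  exact pair_le hq ((Finset.mem_powerset.mp hB).trans (Finset.erase_subset _ _))

lemma eq_pairs {S : Finset α} {q : Finset (α × α)} (hq : IsPOon S q) {k m : ℕ}
    (hk : S.card = k) (hm : (minset S q).card = m) (hm1 : 1 ≤ m) (hmk : m ≤ k)
    {a₀ : α} (ha₀ : a₀ ∈ minset S q)
    (heq : dnum S q = 2 ^ (m - 1) + 2 ^ (k - 1)) :
    ∀ B ⊆ (minset S q).erase a₀,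
      gfib S q B + gfib S q (minset S q \ B) = 1 + 2 ^ (S \ minset S q).card := by
  have h := heq
  rw [dnum_eq_sum_pairs ha₀, ← sum_pairs_value hk hm hm1 hmk ha₀] at h
  intro B hB
  exact (Finset.sum_eq_sum_iff_of_le fun B hB =>
    pair_le hq ((Finset.mem_powerset.mp hB).trans (Finset.erase_subset _ _))).mp h B
    (Finset.mem_powerset.mpr hB)

lemma pair_eq_cases {S : Finset α} {q : Finset (α × α)} (hq : IsPOon S q)
    {B : Finset α} (hB : B ⊆ minset S q)
    (h : gfib S q B + gfib S q (minset S q \ B) = 1 + 2 ^ (S \ minset S q).card) :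
    (gfib S q B = 2 ^ ((S \ minset S q) \ ucl q (minset S q \ B)).card ∧
     gfib S q (minset S q \ B) = 2 ^ ((S \ minset S q) \ ucl q B).card) ∧
    ((((S \ minset S q) \ ucl q (minset S q \ B)).card = 0 ∧
        ((S \ minset S q) \ ucl q B).card = (S \ minset S q).card) ∨
     (((S \ minset S q) \ ucl q (minset S q \ B)).card = (S \ minset S q).card ∧
        ((S \ minset S q) \ ucl q B).card = 0)) := by
  set x := ((S \ minset S q) \ ucl q (minset S q \ B)).card with hx
  set y := ((S \ minset S q) \ ucl q B).card with hy
  set n := (S \ minset S q).card with hn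
  have h1 : gfib S q B ≤ 2 ^ x := gfib_le
  have h2 : gfib S q (minset S q \ B) ≤ 2 ^ y := by
    have := gfib_le (S := S) (q := q) (A := minset S q \ B)
    rwa [Finset.sdiff_sdiff_eq_self hB] at this
  have h3 : 2 ^ x + 2 ^ y ≤ 1 + 2 ^ (x + y) := two_pow_add_two_pow_le x y
  have h4 : x + y ≤ n := card_add_card_le hq hB
  have h5 : 2 ^ (x + y) ≤ 2 ^ n := Nat.pow_le_pow_right (by norm_num) h4
  have hchain : 2 ^ x + 2 ^ y = 1 + 2 ^ (x + y) ∧ 2 ^ (x + y) = 2 ^ n ∧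
      gfib S q B = 2 ^ x ∧ gfib S q (minset S q \ B) = 2 ^ y := by
    constructor
    · omega
    constructor
    · omega
    constructor <;> omega
  obtain ⟨hc1, hc2, hg1, hg2⟩ := hchain
  have hxyn : x + y = n := Nat.pow_right_injective (le_refl 2) hc2
  refine ⟨⟨hg1, hg2⟩, ?_⟩
  rcases two_pow_eq_cases hc1 with h0 | h0
  · left; omega
  · right; omega

lemma fiber_surj {S : Finset α} {q : Finset (α × α)} (hq : IsPOon S q)
    (h : gfib S q (minset S q) = 2 ^ (S \ minset S q).card) :
    ∀ B ⊆ S \ minset S q, (minset S q ∪ B) ∈ downsets S q := by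
  intro B hB
  set s := (downsets S q).filter fun D => D ∩ minset S q = minset S q with hs
  have himg : s.image (fun D => D \ minset S q) ⊆ (S \ minset S q).powerset := by
    intro E hE
    obtain ⟨D, hD, rfl⟩ := Finset.mem_image.mp hE
    rw [hs, Finset.mem_filter] at hD
    refine Finset.mem_powerset.mpr ((fiber_subset hD.1 hD.2).trans Finset.sdiff_subset)
  have hcard : (s.image fun D => D \ minset S q).card = (S \ minset S q).powerset.card := by
    rw [Finset.card_image_of_injOn fiber_injOn, ← hs, ← gfib, h, Finset.card_powerset]
  have himg' : s.image (fun D => D \ minset S q) = (S \ minset S q).powerset :=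
    Finset.eq_of_subset_of_card_le himg (le_of_eq hcard.symm)
  have hBmem : B ∈ s.image (fun D => D \ minset S q) := by
    rw [himg']; exact Finset.mem_powerset.mpr hB
  obtain ⟨D, hD, hDB⟩ := Finset.mem_image.mp hBmem
  rw [hs, Finset.mem_filter] at hD
  have heqD : minset S q ∪ B = D := by
    rw [← hDB]
    nth_rewrite 1 [← hD.2]
    exact inter_union_sdiff_self D (minset S q)
  rw [heqD]
  exact hD.1

end assemble

section iso

lemma dnum_POIso {β : Type*} [DecidableEq β] {S : Finset α} {q : Finset (α × α)}
    {T : Finset β} {r : Finset (β × β)} (hq : q ⊆ S ×ˢ S) (hr : r ⊆ T ×ˢ T)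
    (h : POIso S q T r) : dnum S q = dnum T r := by
  obtain ⟨f, ⟨hmaps, hinj, hsurj⟩, hrel⟩ := h
  apply Finset.card_bij (fun D _ => D.image f)
  · intro D hD
    obtain ⟨hDS, hdown⟩ := mem_downsets.mp hD
    rw [mem_downsets]
    constructor
    · intro y hy
      obtain ⟨x, hx, rfl⟩ := Finset.mem_image.mp hy
      exact Finset.mem_coe.mp (hmaps (hDS hx))
    · intro y' hy' x' hxy'
      obtain ⟨y, hy, rfl⟩ := Finset.mem_image.mp hy'
      have hx'T : x' ∈ T := (Finset.mem_product.mp (hr hxy')).1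
      obtain ⟨x, hxS, rfl⟩ := hsurj hx'T
      have hyS : y ∈ S := hDS hy
      have : (x, y) ∈ q := (hrel x hxS y hyS).mpr hxy'
      exact Finset.mem_image.mpr ⟨x, hdown y hy x this, rfl⟩
  · intro D₁ h₁ D₂ h₂ himg
    have hD₁ : (D₁ : Set α) ⊆ ↑S := (mem_downsets.mp h₁).1
    have hD₂ : (D₂ : Set α) ⊆ ↑S := (mem_downsets.mp h₂).1
    ext x
    constructor
    · intro hx
      have : f x ∈ D₂.image f := by rw [← himg]; exact Finset.mem_image_of_mem f hx
      obtain ⟨y, hy, hfy⟩ := Finset.mem_image.mp this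
      rwa [← hinj (hD₂ hy) (hD₁ hx) hfy]
    · intro hx
      have : f x ∈ D₁.image f := by rw [himg]; exact Finset.mem_image_of_mem f hx
      obtain ⟨y, hy, hfy⟩ := Finset.mem_image.mp this
      rwa [← hinj (hD₁ hy) (hD₂ hx) hfy]
  · intro E hE
    obtain ⟨hET, hdown⟩ := mem_downsets.mp hE
    refine ⟨S.filter fun x => f x ∈ E, ?_, ?_⟩
    · rw [mem_downsets]
      refine ⟨Finset.filter_subset _ _, ?_⟩
      intro y hy x hxy
      rw [Finset.mem_filter] at hy ⊢
      have hxS : x ∈ S := (Finset.mem_product.mp (hq hxy)).1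
      exact ⟨hxS, hdown (f y) hy.2 (f x) ((hrel x hxS y hy.1).mp hxy)⟩
    · ext y
      simp only [Finset.mem_image, Finset.mem_filter]
      constructor
      · rintro ⟨x, ⟨hxS, hfx⟩, rfl⟩; exact hfx
      · intro hy
        obtain ⟨x, hxS, rfl⟩ := hsurj (hET hy)
        exact ⟨x, ⟨Finset.mem_coe.mp hxS, hy⟩, rfl⟩

end iso

section model

lemma mem_modelr {k m : ℕ} {u v : ℕ} :
    (u, v) ∈ ((Finset.range k).image fun i => (i, i)) ∪
        (({m - 1} : Finset ℕ) ×ˢ (Finset.range k \ Finset.range m)) ↔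
      (u = v ∧ u ∈ Finset.range k) ∨
      (u = m - 1 ∧ v ∈ Finset.range k \ Finset.range m) := by
  simp only [Finset.mem_union, Finset.mem_image, Finset.mem_product, Finset.mem_singleton,
    Prod.mk.injEq, Finset.mem_range, Finset.mem_sdiff]
  constructor
  · rintro (⟨i, hi, rfl, rfl⟩ | ⟨rfl, hv⟩)
    · exact Or.inl ⟨rfl, hi⟩
    · exact Or.inr ⟨rfl, hv⟩
  · rintro (⟨rfl, hu⟩ | ⟨rfl, hv⟩)
    · exact Or.inl ⟨u, hu, rfl, rfl⟩
    · exact Or.inr ⟨rfl, hv⟩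

lemma modelr_subset {k m : ℕ} (hm1 : 1 ≤ m) (hmk : m ≤ k) :
    (((Finset.range k).image fun i => (i, i)) ∪
        (({m - 1} : Finset ℕ) ×ˢ (Finset.range k \ Finset.range m)))
      ⊆ Finset.range k ×ˢ Finset.range k := by
  intro p hp
  obtain ⟨u, v⟩ := p
  rcases mem_modelr.mp hp with ⟨he, hu⟩ | ⟨he, hv⟩
  · rw [Finset.mem_product, ← he]; exact ⟨hu, hu⟩
  · rw [Finset.mem_product, he]
    have := (Finset.mem_sdiff.mp hv).1
    refine ⟨Finset.mem_range.mpr ?_, this⟩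
    rw [Finset.mem_range] at this
    omega

lemma card_powerset_filter_mem {s : Finset α} {a : α} (ha : a ∈ s) :
    (s.powerset.filter fun D => a ∈ D).card = 2 ^ (s.card - 1) := by
  rw [← Finset.card_erase_of_mem ha, ← Finset.card_powerset]
  apply Finset.card_bij (fun D _ => D.erase a)
  · intro D hD
    rw [Finset.mem_filter, Finset.mem_powerset] at hD
    exact Finset.mem_powerset.mpr (Finset.erase_subset_erase a hD.1)
  · intro D₁ h₁ D₂ h₂ he
    rw [Finset.mem_filter] at h₁ h₂
    rw [← Finset.insert_erase h₁.2, he, Finset.insert_erase h₂.2]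
  · intro E hE
    rw [Finset.mem_powerset] at hE
    have haE : a ∉ E := fun h => Finset.notMem_erase a s (hE h)
    refine ⟨insert a E, ?_, ?_⟩
    · rw [Finset.mem_filter, Finset.mem_powerset]
      exact ⟨Finset.insert_subset ha (hE.trans (Finset.erase_subset a s)),
        Finset.mem_insert_self a E⟩
    · rw [Finset.erase_insert haE]

lemma model_dnum {k m : ℕ} (hm1 : 1 ≤ m) (hmk : m ≤ k) :
    dnum (Finset.range k)
      (((Finset.range k).image fun i => (i, i)) ∪
        (({m - 1} : Finset ℕ) ×ˢ (Finset.range k \ Finset.range m)))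
      = 2 ^ (m - 1) + 2 ^ (k - 1) := by
  have hchar : downsets (Finset.range k)
      (((Finset.range k).image fun i => (i, i)) ∪
        (({m - 1} : Finset ℕ) ×ˢ (Finset.range k \ Finset.range m)))
      = (Finset.range k).powerset.filter fun D => m - 1 ∈ D ∨ D ⊆ Finset.range (m - 1) := by
    unfold downsets
    apply Finset.filter_congr
    intro D hD
    rw [Finset.mem_powerset] at hD
    constructor
    · intro hP
      by_cases hmem : m - 1 ∈ D
      · exact Or.inl hmem
      · right
        intro y hy
        have hyk : y ∈ Finset.range k := hD hy
        rw [Finset.mem_range] at hyk ⊢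
        by_contra hge
        push_neg at hge
        have hyne : y ≠ m - 1 := fun h => hmem (h ▸ hy)
        have hym : ¬ y < m := by omega
        have : (m - 1, y) ∈ _ := mem_modelr.mpr (Or.inr ⟨rfl, Finset.mem_sdiff.mpr
          ⟨Finset.mem_range.mpr hyk, fun h => hym (Finset.mem_range.mp h)⟩⟩)
        exact hmem (hP y hy (m - 1) this)
    · intro hOr y hy x hxy
      rcases mem_modelr.mp hxy with ⟨he, _⟩ | ⟨he, hv⟩
      · rwa [he]
      · subst he
        rcases hOr with hmem | hsub
        · exact hmem
        · exfalso
          have h1 := hsub hy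
          rw [Finset.mem_range] at h1
          have h2 := (Finset.mem_sdiff.mp hv).2
          rw [Finset.mem_range] at h2
          have h3 := h2
          omega
  rw [dnum, hchar, Finset.filter_or, Finset.card_union_of_disjoint, card_powerset_filter_mem,
    Finset.card_range]
  · have hfe : (Finset.range k).powerset.filter (fun D => D ⊆ Finset.range (m - 1))
        = (Finset.range (m - 1)).powerset := by
      ext D
      simp only [Finset.mem_filter, Finset.mem_powerset]
      constructor
      · exact fun h => h.2
      · intro h
        refine ⟨h.trans ?_, h⟩
        intro x hx
        rw [Finset.mem_range] at hx ⊢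
        omega
    rw [hfe, Finset.card_powerset, Finset.card_range]
    ring
  · rw [Finset.mem_range]; omega
  · rw [Finset.disjoint_left]
    intro D hD hD'
    rw [Finset.mem_filter] at hD hD'
    have := hD'.2 hD.2
    rw [Finset.mem_range] at this
    omega

end model

lemma ucl_empty {q : Finset (α × α)} : ucl q (∅ : Finset α) = ∅ := by
  ext y
  simp only [mem_ucl, Finset.notMem_empty, false_and, exists_false, iff_false,
    not_false_iff]

lemma structure_of_eq {S : Finset α} {q : Finset (α × α)} (hq : IsPOon S q) {k m : ℕ}
    (hk : S.card = k) (hm : (minset S q).card = m) (hm1 : 1 ≤ m) (hmk : m ≤ k)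
    (heq : dnum S q = 2 ^ (m - 1) + 2 ^ (k - 1)) :
    ∃ b ∈ minset S q, ∀ x y : α,
      ((x, y) ∈ q ↔ (x = y ∧ x ∈ S) ∨ (x = b ∧ y ∈ S \ minset S q)) := by
  obtain ⟨a₀, ha₀⟩ := Finset.card_pos.mp (by rw [hm]; omega : 0 < (minset S q).card)
  have hpairs := eq_pairs hq hk hm hm1 hmk ha₀ heq
  by_cases hT : S \ minset S q = ∅
  · -- all elements minimal
    have hMS : minset S q = S := by
      apply Finset.eq_of_subset_of_card_le minset_subset
      have := Finset.sdiff_eq_empty_iff_subset.mp hT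
      exact Finset.card_le_card this
    refine ⟨a₀, ha₀, fun x y => ?_⟩
    constructor
    · intro hxy
      have hx : x ∈ S := (Finset.mem_product.mp (hq.1 hxy)).1
      have hy : y ∈ S := (Finset.mem_product.mp (hq.1 hxy)).2
      have hyM : y ∈ minset S q := by rw [hMS]; exact hy
      exact Or.inl ⟨(mem_minset.mp hyM).2 x hxy, hx⟩
    · rintro (⟨rfl, hx⟩ | ⟨rfl, hy⟩)
      · exact hq.2.1 x hx
      · rw [hT] at hy; exact absurd hy (Finset.notMem_empty _)
  · obtain ⟨t₀, ht₀⟩ := Finset.nonempty_iff_ne_empty.mpr hT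
    -- dichotomy for each B ⊆ M.erase a₀
    have dich : ∀ B ⊆ (minset S q).erase a₀,
        ((∀ t ∈ S \ minset S q, t ∈ ucl q (minset S q \ B)) ∧
          (∀ t ∈ S \ minset S q, t ∉ ucl q B)) ∨
        ((∀ t ∈ S \ minset S q, t ∈ ucl q B) ∧
          (∀ t ∈ S \ minset S q, t ∉ ucl q (minset S q \ B))) := by
      intro B hB
      have hBM : B ⊆ minset S q := hB.trans (Finset.erase_subset _ _)
      obtain ⟨-, hcases⟩ := pair_eq_cases hq hBM (hpairs B hB)
      have hfull : ∀ C : Finset α, ((S \ minset S q) \ ucl q C).card = 0 →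
          ∀ t ∈ S \ minset S q, t ∈ ucl q C := by
        intro C hC t ht
        have := Finset.card_eq_zero.mp hC
        by_contra hno
        have : t ∈ (S \ minset S q) \ ucl q C := Finset.mem_sdiff.mpr ⟨ht, hno⟩
        rw [Finset.card_eq_zero.mp hC] at this
        exact absurd this (Finset.notMem_empty _)
      have hempty : ∀ C : Finset α,
          ((S \ minset S q) \ ucl q C).card = (S \ minset S q).card →
          ∀ t ∈ S \ minset S q, t ∉ ucl q C := by
        intro C hC t ht
        have heqset : (S \ minset S q) \ ucl q C = S \ minset S q :=
          Finset.eq_of_subset_of_card_le Finset.sdiff_subset (le_of_eq hC.symm)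
        intro htu
        have : t ∈ (S \ minset S q) \ ucl q C := heqset.symm ▸ ht
        exact (Finset.mem_sdiff.mp this).2 htu
      rcases hcases with ⟨h1, h2⟩ | ⟨h1, h2⟩
      · exact Or.inl ⟨hfull _ h1, hempty _ h2⟩
      · exact Or.inr ⟨hfull _ h2, hempty _ h1⟩
    -- uniqueness of a "non-empty" minimal
    have key : ∀ a ∈ minset S q, a ≠ a₀ → ∀ a' ∈ minset S q, a' ≠ a →
        ∀ t ∈ S \ minset S q, ∀ t' ∈ S \ minset S q,
        (a, t) ∈ q → (a', t') ∈ q → False := by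
      intro a haM hne a' ha'M hne' t ht t' ht' h1 h2
      have hBsub : {a} ⊆ (minset S q).erase a₀ :=
        Finset.singleton_subset_iff.mpr (Finset.mem_erase.mpr ⟨hne, haM⟩)
      rcases dich {a} hBsub with ⟨-, hemp⟩ | ⟨-, hemp⟩
      · exact hemp t ht (mem_ucl.mpr ⟨a, Finset.mem_singleton_self a, h1⟩)
      · refine hemp t' ht' (mem_ucl.mpr ⟨a', Finset.mem_sdiff.mpr
          ⟨ha'M, ?_⟩, h2⟩)
        rw [Finset.mem_singleton]
        exact hne'
    have uniq : ∀ a ∈ minset S q, ∀ a' ∈ minset S q, a ≠ a' →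
        ∀ t ∈ S \ minset S q, ∀ t' ∈ S \ minset S q,
        (a, t) ∈ q → (a', t') ∈ q → False := by
      intro a haM a' ha'M hne t ht t' ht' h1 h2
      by_cases ha : a = a₀
      · subst ha
        exact key a' ha'M (fun h => hne h.symm) a haM hne t' ht' t ht h2 h1
      · exact key a haM ha a' ha'M (fun h => hne h.symm) t ht t' ht' h1 h2
    -- the bottom element b
    obtain ⟨b, hbM, hbt₀⟩ := exists_min_le hq t₀ (Finset.mem_sdiff.mp ht₀).1
    have hfullb : ∀ t ∈ S \ minset S q, (b, t) ∈ q := by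
      intro t ht
      obtain ⟨a, haM, hat⟩ := exists_min_le hq t (Finset.mem_sdiff.mp ht).1
      by_cases hab : a = b
      · rwa [hab] at hat
      · exact absurd (uniq a haM b hbM hab t ht t₀ ht₀ hat hbt₀) id
    -- antichain property
    have hgM : gfib S q (minset S q) = 2 ^ (S \ minset S q).card := by
      have h0 : (∅ : Finset α) ⊆ (minset S q).erase a₀ := Finset.empty_subset _
      obtain ⟨⟨-, hg2⟩, -⟩ := pair_eq_cases hq (Finset.empty_subset _) (hpairs ∅ h0)
      rwa [Finset.sdiff_empty, ucl_empty, Finset.sdiff_empty] at hg2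
    have hanti : ∀ t ∈ S \ minset S q, ∀ x : α, (x, t) ∈ q →
        x ∈ minset S q ∨ x = t := by
      intro t ht x hxt
      have hD := fiber_surj hq hgM {t} (Finset.singleton_subset_iff.mpr ht)
      have := (mem_downsets.mp hD).2 t (Finset.mem_union_right _
        (Finset.mem_singleton_self t)) x hxt
      rcases Finset.mem_union.mp this with h | h
      · exact Or.inl h
      · exact Or.inr (Finset.mem_singleton.mp h)
    refine ⟨b, hbM, fun x y => ?_⟩
    constructor
    · intro hxy
      have hx : x ∈ S := (Finset.mem_product.mp (hq.1 hxy)).1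
      have hy : y ∈ S := (Finset.mem_product.mp (hq.1 hxy)).2
      by_cases hyM : y ∈ minset S q
      · exact Or.inl ⟨(mem_minset.mp hyM).2 x hxy, hx⟩
      · have hyT : y ∈ S \ minset S q := Finset.mem_sdiff.mpr ⟨hy, hyM⟩
        by_cases hxM : x ∈ minset S q
        · by_cases hxb : x = b
          · exact Or.inr ⟨hxb, hyT⟩
          · exact absurd (uniq x hxM b hbM hxb y hyT t₀ ht₀ hxy hbt₀) id
        · rcases hanti y hyT x hxy with h | h
          · exact absurd h hxM
          · exact Or.inl ⟨h, hx⟩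
    · rintro (⟨rfl, hx⟩ | ⟨rfl, hy⟩)
      · exact hq.2.1 x hx
      · exact hfullb y hy

lemma iso_of_structure {S : Finset α} {q : Finset (α × α)} (hq : IsPOon S q) {k m : ℕ}
    (hk : S.card = k) (hm : (minset S q).card = m) (hm1 : 1 ≤ m) (hmk : m ≤ k)
    {b : α} (hb : b ∈ minset S q)
    (hchar : ∀ x y : α,
      ((x, y) ∈ q ↔ (x = y ∧ x ∈ S) ∨ (x = b ∧ y ∈ S \ minset S q))) :
    POIso S q (Finset.range k)
      (((Finset.range k).image fun i => (i, i)) ∪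
        (({m - 1} : Finset ℕ) ×ˢ (Finset.range k \ Finset.range m))) := by
  obtain ⟨f₁, hf₁⟩ := exists_bijOn_of_card_eq ((minset S q).erase b) (Finset.range (m - 1))
    (by rw [Finset.card_erase_of_mem hb, hm, Finset.card_range])
  obtain ⟨f₂, hf₂⟩ := exists_bijOn_of_card_eq (S \ minset S q)
    (Finset.range k \ Finset.range m)
    (by
      rw [Finset.card_sdiff_of_subset minset_subset, Finset.card_sdiff_of_subset
        (Finset.range_subset_range.mpr hmk), hk, hm, Finset.card_range, Finset.card_range])
  set f : α → ℕ := fun x => if x ∈ minset S q then (if x = b then m - 1 else f₁ x) else f₂ x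
    with hf
  -- value lemmas
  have hvb : f b = m - 1 := by
    rw [hf]; simp only [if_pos hb, if_pos rfl, if_true, eq_self_iff_true]
  have hv1 : ∀ x ∈ (minset S q).erase b, f x = f₁ x ∧ f₁ x < m - 1 := by
    intro x hx
    obtain ⟨hxb, hxM⟩ := Finset.mem_erase.mp hx
    constructor
    · rw [hf]; simp only [if_pos hxM, if_neg hxb]
    · exact Finset.mem_range.mp (hf₁.1 hx)
  have hv2 : ∀ x ∈ S \ minset S q, f x = f₂ x ∧ m ≤ f₂ x ∧ f₂ x < k := by
    intro x hx
    have hxM : x ∉ minset S q := (Finset.mem_sdiff.mp hx).2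
    have hmem := Finset.mem_sdiff.mp (hf₂.1 hx)
    rw [Finset.mem_range] at hmem
    constructor
    · rw [hf]; simp only [if_neg hxM]
    · exact ⟨Nat.le_of_not_lt (fun h => hmem.2 (Finset.mem_range.mpr h)), hmem.1⟩
  have hclass : ∀ x ∈ S, x = b ∨ x ∈ (minset S q).erase b ∨ x ∈ S \ minset S q := by
    intro x hx
    by_cases hxM : x ∈ minset S q
    · by_cases hxb : x = b
      · exact Or.inl hxb
      · exact Or.inr (Or.inl (Finset.mem_erase.mpr ⟨hxb, hxM⟩))
    · exact Or.inr (Or.inr (Finset.mem_sdiff.mpr ⟨hx, hxM⟩))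
  have hmlt : m - 1 < k := by omega
  have hmaps : Set.MapsTo f ↑S ↑(Finset.range k) := by
    intro x hx
    simp only [Finset.coe_range, Set.mem_Iio]
    rcases hclass x hx with rfl | hx1 | hx2
    · rw [hvb]; exact hmlt
    · rw [(hv1 x hx1).1]; have := (hv1 x hx1).2; omega
    · rw [(hv2 x hx2).1]; exact (hv2 x hx2).2.2
  have hinj : Set.InjOn f ↑S := by
    intro x hx y hy hxy
    simp only [Finset.mem_coe] at hx hy
    rcases hclass x hx with rfl | hx1 | hx2 <;> rcases hclass y hy with rfl | hy1 | hy2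
    · rfl
    · exfalso; rw [hvb, (hv1 y hy1).1] at hxy; have := (hv1 y hy1).2; omega
    · exfalso; rw [hvb, (hv2 y hy2).1] at hxy; have := (hv2 y hy2).2.1; omega
    · exfalso; rw [hvb, (hv1 x hx1).1] at hxy; have := (hv1 x hx1).2; omega
    · rw [(hv1 x hx1).1, (hv1 y hy1).1] at hxy
      exact hf₁.2.1 (Finset.mem_coe.mpr hx1) (Finset.mem_coe.mpr hy1) hxy
    · exfalso
      rw [(hv1 x hx1).1, (hv2 y hy2).1] at hxy
      have h1 := (hv1 x hx1).2; have h2 := (hv2 y hy2).2.1; omega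
    · exfalso; rw [hvb, (hv2 x hx2).1] at hxy; have := (hv2 x hx2).2.1; omega
    · exfalso
      rw [(hv2 x hx2).1, (hv1 y hy1).1] at hxy
      have h1 := (hv2 x hx2).2.1; have h2 := (hv1 y hy1).2; omega
    · rw [(hv2 x hx2).1, (hv2 y hy2).1] at hxy
      exact hf₂.2.1 (Finset.mem_coe.mpr hx2) (Finset.mem_coe.mpr hy2) hxy
  have hsurj : Set.SurjOn f ↑S ↑(Finset.range k) := by
    intro y hy
    simp only [Finset.coe_range, Set.mem_Iio] at hy
    by_cases h1 : y < m - 1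
    · obtain ⟨x, hx, hfx⟩ := hf₁.2.2 (by
        simp only [Finset.coe_range, Set.mem_Iio]; exact h1)
      rw [Finset.mem_coe] at hx
      refine ⟨x, Finset.mem_coe.mpr (minset_subset (Finset.mem_erase.mp hx).2), ?_⟩
      rw [(hv1 x hx).1]; exact hfx
    · by_cases h2 : y = m - 1
      · exact ⟨b, Finset.mem_coe.mpr (minset_subset hb), by rw [hvb, h2]⟩
      · obtain ⟨x, hx, hfx⟩ := hf₂.2.2 (by
          simp only [Finset.coe_sdiff, Finset.coe_range, Set.mem_diff, Set.mem_Iio]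
          constructor
          · exact hy
          · simp only [Set.mem_Iio, not_lt]; omega)
        rw [Finset.mem_coe] at hx
        refine ⟨x, Finset.mem_coe.mpr (Finset.mem_sdiff.mp hx).1, ?_⟩
        rw [(hv2 x hx).1]; exact hfx
  refine ⟨f, ⟨hmaps, hinj, hsurj⟩, ?_⟩
  intro x hx y hy
  rw [hchar x y]
  have hmem : ∀ u v : ℕ, ((u, v) ∈ ((Finset.range k).image fun i => (i, i)) ∪
      (({m - 1} : Finset ℕ) ×ˢ (Finset.range k \ Finset.range m)) ↔
      (u = v ∧ u < k) ∨ (u = m - 1 ∧ m ≤ v ∧ v < k)) := by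
    intro u v
    simp only [Finset.mem_union, Finset.mem_image, Finset.mem_product, Finset.mem_singleton,
      Prod.mk.injEq, Finset.mem_range, Finset.mem_sdiff, not_lt]
    constructor
    · rintro (⟨i, hi, rfl, rfl⟩ | ⟨rfl, hv1, hv2⟩)
      · exact Or.inl ⟨rfl, hi⟩
      · exact Or.inr ⟨rfl, hv2, hv1⟩
    · rintro (⟨rfl, hu⟩ | ⟨rfl, hv1, hv2⟩)
      · exact Or.inl ⟨u, hu, rfl, rfl⟩
      · exact Or.inr ⟨rfl, hv2, hv1⟩
  rw [hmem (f x) (f y)]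
  constructor
  · rintro (⟨rfl, hxS⟩ | ⟨rfl, hyT⟩)
    · left
      refine ⟨rfl, ?_⟩
      have := hmaps (Finset.mem_coe.mpr hxS)
      simpa only [Finset.coe_range, Set.mem_Iio] using this
    · right
      obtain ⟨hfy, hy1, hy2⟩ := hv2 y hyT
      exact ⟨hvb, by rw [hfy]; exact hy1, by rw [hfy]; exact hy2⟩
  · rintro (⟨hfeq, -⟩ | ⟨hfx, hfy1, hfy2⟩)
    · exact Or.inl ⟨hinj (Finset.mem_coe.mpr hx) (Finset.mem_coe.mpr hy) hfeq, hx⟩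
    · right
      have hxb : x = b := by
        rcases hclass x hx with rfl | hx1 | hx2
        · rfl
        · exfalso; rw [(hv1 x hx1).1] at hfx; have := (hv1 x hx1).2; omega
        · exfalso; rw [(hv2 x hx2).1] at hfx; have := (hv2 x hx2).2.1; omega
      have hyT : y ∈ S \ minset S q := by
        rcases hclass y hy with rfl | hy1 | hy2
        · exfalso; rw [hvb] at hfy1; omega
        · exfalso; rw [(hv1 y hy1).1] at hfy1; have := (hv1 y hy1).2; omega
        · exact hy2
      exact ⟨hxb, hyT⟩

/-- Corollary 3.5: a poset with `k` points of which exactly `m` (`1 ≤ m ≤ k`) are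
minimal has at most `2^{m−1} + 2^{k−1}` downsets, with equality iff it is
isomorphic to `A_{m−1} + (A_1 ⊕ A_{k−m})`. -/
theorem stmt_5 (S : Finset α) (q : Finset (α × α)) (hq : IsPOon S q)
    (k m : ℕ) (hk : S.card = k) (hm : (minset S q).card = m)
    (hm1 : 1 ≤ m) (hmk : m ≤ k) :
    dnum S q ≤ 2 ^ (m - 1) + 2 ^ (k - 1) ∧
    (dnum S q = 2 ^ (m - 1) + 2 ^ (k - 1) ↔
      POIso S q (Finset.range k)
        (((Finset.range k).image fun i => (i, i)) ∪
          (({m - 1} : Finset ℕ) ×ˢ (Finset.range k \ Finset.range m)))) := by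
  refine ⟨dnum_le hq hk hm hm1 hmk, ⟨fun heq => ?_, fun hiso => ?_⟩⟩
  · obtain ⟨b, hb, hchar⟩ := structure_of_eq hq hk hm hm1 hmk heq
    exact iso_of_structure hq hk hm hm1 hmk hb hchar
  · rw [dnum_POIso hq.1 (modelr_subset hm1 hmk) hiso]
    exact model_dnum hm1 hmk
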